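/- A compact subset A of [0,1] is an attractor of a system of n weak contractions on [0,1] if and only if A × {0}^{d-1} is an attractor of a system of n weak contractions on [0,1]^d. -/

import Mathlib

open Metric Set Topology Filter TopologicalSpace

noncomputable section

/-- The unit cube `[0,1]^d` with the Euclidean metric. -/
abbrev unitCube (d : ℕ) : Type :=
  {x : EuclideanSpace ℝ (Fin d) // ∀ i, x i ∈ Set.Icc (0:ℝ) 1}

/-- A contraction: a Lipschitz map with constant `< 1`. -/
def IsContraction {X : Type*} [MetricSpace X] (f : X → X) : Prop :=
  ∃ L : NNReal, L < 1 ∧ LipschitzWith L f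

/-- A weak contraction: `d(f x, f y) < d(x, y)` for `x ≠ y`. -/
def IsWeakContraction {X : Type*} [MetricSpace X] (f : X → X) : Prop :=
  ∀ x y, x ≠ y → dist (f x) (f y) < dist x y

/-- `Ld n d`: attractors of IFSs of `n` contractions on `[0,1]^d`,
as a subset of the hyperspace of nonempty compact sets. -/
def Ld (n d : ℕ) : Set (NonemptyCompacts (unitCube d)) :=
  {A | ∃ f : Fin n → unitCube d → unitCube d,
    (∀ i, IsContraction (f i)) ∧
      (A : Set (unitCube d)) = ⋃ i, f i '' (A : Set (unitCube d))}

/-- `wLd n d`: attractors of systems of `n` weak contractions on `[0,1]^d`. -/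
def wLd (n d : ℕ) : Set (NonemptyCompacts (unitCube d)) :=
  {A | ∃ f : Fin n → unitCube d → unitCube d,
    (∀ i, IsWeakContraction (f i)) ∧
      (A : Set (unitCube d)) = ⋃ i, f i '' (A : Set (unitCube d))}

def IFSd (d : ℕ) : Set (NonemptyCompacts (unitCube d)) := ⋃ n, Ld n d

def wIFSd (d : ℕ) : Set (NonemptyCompacts (unitCube d)) := ⋃ n, wLd n d

/-- The embedding `[0,1] → [0,1]^d`, `a ↦ (a,0,…,0)`. -/
def emb (d : ℕ) (hd : 0 < d) (x : unitCube 1) : unitCube d :=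
  ⟨(WithLp.toLp 2 (fun i => if i = (⟨0, hd⟩ : Fin d) then x.1 0 else 0) : EuclideanSpace ℝ (Fin d)),
    fun i => by
      dsimp only [WithLp.ofLp_toLp]
      split_ifs
      · exact x.2 0
      · exact ⟨le_refl 0, zero_le_one⟩⟩

/-- The projection `[0,1]^d → [0,1]` onto the first coordinate. -/
def projL (d : ℕ) (hd : 0 < d) (x : unitCube d) : unitCube 1 :=
  ⟨(WithLp.toLp 2 (fun _ => x.1 ⟨0, hd⟩) : EuclideanSpace ℝ (Fin 1)), fun _ => x.2 ⟨0, hd⟩⟩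


lemma projL_emb (d : ℕ) (hd : 0 < d) (x : unitCube 1) : projL d hd (emb d hd x) = x := by
  apply Subtype.ext
  ext i
  have : i = 0 := Subsingleton.elim i 0
  subst this
  simp [projL, emb]

lemma emb_dist (d : ℕ) (hd : 0 < d) (x y : unitCube 1) :
    dist (emb d hd x) (emb d hd y) = dist x y := by
  rw [Subtype.dist_eq, Subtype.dist_eq, EuclideanSpace.dist_eq, EuclideanSpace.dist_eq]
  congr 1
  rw [Fin.sum_univ_one]
  rw [Finset.sum_congr rfl (g := fun i => if i = (⟨0, hd⟩ : Fin d) then dist (x.1 0) (y.1 0) ^ 2 else 0)]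
  · simp
  · intro i _
    simp only [emb]
    split_ifs with h
    · rfl
    · simp

lemma projL_dist (d : ℕ) (hd : 0 < d) (x y : unitCube d) :
    dist (projL d hd x) (projL d hd y) ≤ dist x y := by
  rw [Subtype.dist_eq, Subtype.dist_eq, EuclideanSpace.dist_eq, EuclideanSpace.dist_eq]
  apply Real.sqrt_le_sqrt
  rw [Fin.sum_univ_one]
  exact Finset.single_le_sum (f := fun i => dist (x.1 i) (y.1 i) ^ 2)
    (fun i _ => by positivity) (Finset.mem_univ (⟨0, hd⟩ : Fin d))

lemma emb_injective (d : ℕ) (hd : 0 < d) : Function.Injective (emb d hd) :=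
  Function.LeftInverse.injective (projL_emb d hd)

lemma projL_emb_image (d : ℕ) (hd : 0 < d) (S : Set (unitCube 1)) :
    projL d hd '' (emb d hd '' S) = S := by
  rw [Set.image_image]
  simp [projL_emb]


theorem stmt5 (n d : ℕ) (hn : 0 < n) (hd : 0 < d)
    (A : Set (unitCube 1)) (hA : IsCompact A) (hAne : A.Nonempty) :
    (∃ f : Fin n → unitCube 1 → unitCube 1,
      (∀ i, IsWeakContraction (f i)) ∧ A = ⋃ i, f i '' A) ↔
    (∃ g : Fin n → unitCube d → unitCube d,
      (∀ i, IsWeakContraction (g i)) ∧ emb d hd '' A = ⋃ i, g i '' (emb d hd '' A)) := by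
  constructor
  · rintro ⟨f, hf, hAf⟩
    refine ⟨fun i => emb d hd ∘ f i ∘ projL d hd, ?_, ?_⟩
    · intro i x y hxy
      by_cases h : projL d hd x = projL d hd y
      · simp only [Function.comp_apply, h, dist_self]
        exact dist_pos.mpr hxy
      · calc dist ((emb d hd ∘ f i ∘ projL d hd) x) ((emb d hd ∘ f i ∘ projL d hd) y)
            = dist (f i (projL d hd x)) (f i (projL d hd y)) := emb_dist d hd _ _
          _ < dist (projL d hd x) (projL d hd y) := hf i _ _ h
          _ ≤ dist x y := projL_dist d hd x y
    · calc emb d hd '' A = emb d hd '' (⋃ i, f i '' A) := by rw [← hAf]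
        _ = ⋃ i, emb d hd '' (f i '' A) := Set.image_iUnion
        _ = ⋃ i, (emb d hd ∘ f i ∘ projL d hd) '' (emb d hd '' A) := by
            apply Set.iUnion_congr
            intro i
            rw [Set.image_comp, Set.image_comp, projL_emb_image]
  · rintro ⟨g, hg, hAg⟩
    refine ⟨fun i => projL d hd ∘ g i ∘ emb d hd, ?_, ?_⟩
    · intro i x y hxy
      have hxy' : emb d hd x ≠ emb d hd y := fun h => hxy (emb_injective d hd h)
      calc dist ((projL d hd ∘ g i ∘ emb d hd) x) ((projL d hd ∘ g i ∘ emb d hd) y)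
          ≤ dist (g i (emb d hd x)) (g i (emb d hd y)) := projL_dist d hd _ _
        _ < dist (emb d hd x) (emb d hd y) := hg i _ _ hxy'
        _ = dist x y := emb_dist d hd x y
    · calc A = projL d hd '' (emb d hd '' A) := (projL_emb_image d hd A).symm
        _ = projL d hd '' (⋃ i, g i '' (emb d hd '' A)) := by rw [← hAg]
        _ = ⋃ i, projL d hd '' (g i '' (emb d hd '' A)) := Set.image_iUnion
        _ = ⋃ i, (projL d hd ∘ g i ∘ emb d hd) '' A := by
            apply Set.iUnion_congr
            intro i
            rw [Set.image_comp, Set.image_comp]
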